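/- For every K ≤ 0, real N > 1 and 0 < r ≤ R, one has the two-sided comparison φ_{0,N}(r,R) ≤ φ_{K,N}(r,R) ≤ (s_{K,N}(R)/R)^{N−1}·φ_{0,N}(r,R). -/

import Mathlib

open Real

/-- The comparison function `s_{K,N}`. -/
noncomputable def sKN (K N θ : ℝ) : ℝ :=
  if 0 < K then Real.sqrt ((N - 1) / K) * Real.sin (θ * Real.sqrt (K / (N - 1)))
  else if K = 0 then θ
  else Real.sqrt ((N - 1) / (-K)) * Real.sinh (θ * Real.sqrt (-K / (N - 1)))

/-- `φ_{K,N}(r,R) = ∫∫_{r ≤ ξ ≤ η ≤ R} (s_{K,N}(η)/s_{K,N}(ξ))^{N−1} dη dξ`. -/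
noncomputable def phiKN (K N r R : ℝ) : ℝ :=
  ∫ ξ in r..R, ∫ η in ξ..R, (sKN K N η / sKN K N ξ) ^ (N - 1)

lemma sinh_div_mono {x y : ℝ} (hx : 0 < x) (hxy : x ≤ y) :
    Real.sinh x / x ≤ Real.sinh y / y := by
  have hg0 : ∀ t : ℝ, 0 ≤ t → Real.sinh t ≤ t * Real.cosh t := by
    have hd : ∀ t : ℝ, HasDerivAt (fun t => t * Real.cosh t - Real.sinh t)
        (t * Real.sinh t) t := by
      intro t
      have h : HasDerivAt (fun t => t * Real.cosh t - Real.sinh t) (1 * Real.cosh t + id t * Real.sinh t - Real.cosh t) t := ((hasDerivAt_id t).mul (Real.hasDerivAt_cosh t)).sub (Real.hasDerivAt_sinh t)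
      convert h using 1; simp only [id_eq]; ring
    have hg : MonotoneOn (fun t => t * Real.cosh t - Real.sinh t) (Set.Ici 0) := by
      apply monotoneOn_of_deriv_nonneg (convex_Ici 0)
      · exact ((continuous_id.mul Real.continuous_cosh).sub Real.continuous_sinh).continuousOn
      · intro t ht
        exact (hd t).differentiableAt.differentiableWithinAt
      · intro t ht
        rw [interior_Ici] at ht
        rw [(hd t).deriv]
        exact mul_nonneg (le_of_lt ht) (Real.sinh_nonneg_iff.2 (le_of_lt ht))
    intro t ht
    have := hg (Set.self_mem_Ici) (Set.mem_Ici.2 ht) ht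
    simp only [Real.sinh_zero, Real.cosh_zero, mul_one, zero_mul, sub_zero] at this
    linarith [this]
  have hmono : MonotoneOn (fun t => Real.sinh t / t) (Set.Ioi 0) := by
    apply monotoneOn_of_deriv_nonneg (convex_Ioi 0)
    · exact Real.continuous_sinh.continuousOn.div continuousOn_id fun t ht => ne_of_gt ht
    · intro t ht
      rw [interior_Ioi] at ht
      have hdt : HasDerivAt (fun t => Real.sinh t / t)
          ((Real.cosh t * t - Real.sinh t * 1) / t ^ 2) t :=
        (Real.hasDerivAt_sinh t).div (hasDerivAt_id t) (ne_of_gt ht)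
      exact hdt.differentiableAt.differentiableWithinAt
    · intro t ht
      rw [interior_Ioi] at ht
      have hdt : HasDerivAt (fun t => Real.sinh t / t)
          ((Real.cosh t * t - Real.sinh t * 1) / t ^ 2) t :=
        (Real.hasDerivAt_sinh t).div (hasDerivAt_id t) (ne_of_gt ht)
      rw [hdt.deriv]
      have := hg0 t (le_of_lt ht)
      have ht2 : (0:ℝ) ≤ t ^ 2 := sq_nonneg t
      apply div_nonneg _ ht2
      linarith
  exact hmono (Set.mem_Ioi.2 hx) (Set.mem_Ioi.2 (lt_of_lt_of_le hx hxy)) hxy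

/-- For `K ≤ 0` and `0 < r ≤ R`:
`φ_{0,N}(r,R) ≤ φ_{K,N}(r,R) ≤ (s_{K,N}(R)/R)^{N−1}·φ_{0,N}(r,R)`. -/
theorem phiKN_comparison (K N r R : ℝ) (hK : K ≤ 0) (hN : 1 < N)
    (hr : 0 < r) (hrR : r ≤ R) :
    phiKN 0 N r R ≤ phiKN K N r R ∧
    phiKN K N r R ≤ (sKN K N R / R) ^ (N - 1) * phiKN 0 N r R := by
  have hR : 0 < R := lt_of_lt_of_le hr hrR
  have hp : (0:ℝ) < N - 1 := by linarith
  have h0 : ∀ θ : ℝ, sKN 0 N θ = θ := by intro θ; simp [sKN]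
  rcases eq_or_lt_of_le hK with hK0 | hKneg
  · -- K = 0
    subst hK0
    refine ⟨le_refl _, ?_⟩
    rw [h0, div_self hR.ne', Real.one_rpow, one_mul]
  · -- K < 0
    set p := N - 1 with hpdef
    set a := Real.sqrt (-K / (N - 1)) with hadef
    have ha : 0 < a := Real.sqrt_pos.2 (div_pos (neg_pos.2 hKneg) (by linarith))
    have hsKN : ∀ θ : ℝ, sKN K N θ = a⁻¹ * Real.sinh (θ * a) := by
      intro θ
      rw [sKN, if_neg (not_lt.2 hK), if_neg (ne_of_lt hKneg), ← hadef,
        show (N - 1) / (-K) = (-K / (N - 1))⁻¹ by rw [inv_div], Real.sqrt_inv, ← hadef]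
    have hratio : ∀ ξ η : ℝ, sKN K N η / sKN K N ξ = Real.sinh (η * a) / Real.sinh (ξ * a) := by
      intro ξ η
      rw [hsKN, hsKN, mul_div_mul_left _ _ (inv_ne_zero ha.ne')]
    -- ratio bounds
    have ratio_lb : ∀ ⦃ξ η : ℝ⦄, r ≤ ξ → ξ ≤ η →
        η / ξ ≤ Real.sinh (η * a) / Real.sinh (ξ * a) := by
      intro ξ η hξ hξη
      have hξ0 : 0 < ξ := lt_of_lt_of_le hr hξ
      have hη0 : 0 < η := lt_of_lt_of_le hξ0 hξη
      have hsξ : 0 < Real.sinh (ξ * a) := Real.sinh_pos_iff.2 (mul_pos hξ0 ha)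
      have h1 : Real.sinh (ξ * a) / (ξ * a) ≤ Real.sinh (η * a) / (η * a) :=
        sinh_div_mono (mul_pos hξ0 ha) (mul_le_mul_of_nonneg_right hξη ha.le)
      rw [div_le_div_iff₀ (mul_pos hξ0 ha) (mul_pos hη0 ha)] at h1
      rw [div_le_div_iff₀ hξ0 hsξ]
      nlinarith [h1, ha, hξ0, hη0]
    have ratio_ub : ∀ ⦃ξ η : ℝ⦄, r ≤ ξ → ξ ≤ η → η ≤ R →
        Real.sinh (η * a) / Real.sinh (ξ * a) ≤ Real.sinh (R * a) / (R * a) * (η / ξ) := by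
      intro ξ η hξ hξη hηR
      have hξ0 : 0 < ξ := lt_of_lt_of_le hr hξ
      have hη0 : 0 < η := lt_of_lt_of_le hξ0 hξη
      have hsξ : 0 < Real.sinh (ξ * a) := Real.sinh_pos_iff.2 (mul_pos hξ0 ha)
      have hsη : 0 < Real.sinh (η * a) := Real.sinh_pos_iff.2 (mul_pos hη0 ha)
      have hsR : 0 < Real.sinh (R * a) := Real.sinh_pos_iff.2 (mul_pos hR ha)
      have h1 : Real.sinh (η * a) / (η * a) ≤ Real.sinh (R * a) / (R * a) :=
        sinh_div_mono (mul_pos hη0 ha) (mul_le_mul_of_nonneg_right hηR ha.le)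
      rw [div_le_div_iff₀ (mul_pos hη0 ha) (mul_pos hR ha)] at h1
      have h2 : ξ * a ≤ Real.sinh (ξ * a) := Real.self_le_sinh_iff.2 (mul_pos hξ0 ha).le
      rw [div_mul_div_comm, div_le_div_iff₀ hsξ (mul_pos (mul_pos hR ha) hξ0)]
      nlinarith [mul_le_mul_of_nonneg_right h1 hξ0.le,
        mul_le_mul_of_nonneg_left h2 (mul_pos hsR hη0).le]
    -- pointwise rpow bounds
    set c := Real.sinh (R * a) / (R * a) with hcdef
    have hc0 : 0 ≤ c := div_nonneg (Real.sinh_nonneg_iff.2 (mul_pos hR ha).le)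
      (mul_pos hR ha).le
    have hpt1 : ∀ ⦃ξ η : ℝ⦄, r ≤ ξ → ξ ≤ η →
        (η / ξ) ^ p ≤ (Real.sinh (η * a) / Real.sinh (ξ * a)) ^ p := by
      intro ξ η hξ hξη
      have hξ0 : 0 < ξ := lt_of_lt_of_le hr hξ
      exact Real.rpow_le_rpow (div_nonneg (le_of_lt (lt_of_lt_of_le hξ0 hξη)) hξ0.le)
        (ratio_lb hξ hξη) hp.le
    have hpt2 : ∀ ⦃ξ η : ℝ⦄, r ≤ ξ → ξ ≤ η → η ≤ R →
        (Real.sinh (η * a) / Real.sinh (ξ * a)) ^ p ≤ c ^ p * (η / ξ) ^ p := by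
      intro ξ η hξ hξη hηR
      have hξ0 : 0 < ξ := lt_of_lt_of_le hr hξ
      have hη0 : 0 < η := lt_of_lt_of_le hξ0 hξη
      have hsξ : 0 < Real.sinh (ξ * a) := Real.sinh_pos_iff.2 (mul_pos hξ0 ha)
      have hsη : 0 ≤ Real.sinh (η * a) := (Real.sinh_pos_iff.2 (mul_pos hη0 ha)).le
      calc (Real.sinh (η * a) / Real.sinh (ξ * a)) ^ p
          ≤ (c * (η / ξ)) ^ p :=
            Real.rpow_le_rpow (div_nonneg hsη hsξ.le) (ratio_ub hξ hξη hηR) hp.le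
        _ = c ^ p * (η / ξ) ^ p := Real.mul_rpow hc0 (div_nonneg hη0.le hξ0.le)
    -- integrability of inner integrands
    have contK : ∀ ξ : ℝ, Continuous fun η => (Real.sinh (η * a) / Real.sinh (ξ * a)) ^ p := by
      intro ξ
      exact ((Real.continuous_sinh.comp (continuous_id.mul continuous_const)).div_const
        _).rpow_const fun x => Or.inr hp.le
    have cont0 : ∀ ξ : ℝ, Continuous fun η : ℝ => (η / ξ) ^ p := by
      intro ξ
      exact (continuous_id.div_const ξ).rpow_const fun x => Or.inr hp.le
    -- inner integral comparisons
    have inner1 : ∀ ξ ∈ Set.Icc r R,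
        (∫ η in ξ..R, (η / ξ) ^ p) ≤ ∫ η in ξ..R, (Real.sinh (η * a) / Real.sinh (ξ * a)) ^ p := by
      intro ξ hξ
      apply intervalIntegral.integral_mono_on hξ.2
        ((cont0 ξ).intervalIntegrable _ _) ((contK ξ).intervalIntegrable _ _)
      intro η hη
      exact hpt1 hξ.1 hη.1
    have inner2 : ∀ ξ ∈ Set.Icc r R,
        (∫ η in ξ..R, (Real.sinh (η * a) / Real.sinh (ξ * a)) ^ p) ≤
          c ^ p * ∫ η in ξ..R, (η / ξ) ^ p := by
      intro ξ hξ
      rw [← intervalIntegral.integral_const_mul]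
      apply intervalIntegral.integral_mono_on hξ.2
        ((contK ξ).intervalIntegrable _ _)
        ((continuous_const.mul (cont0 ξ)).intervalIntegrable _ _)
      intro η hη
      exact hpt2 hξ.1 hη.1 hη.2
    -- continuity of outer integrands on [r, R]
    have huIcc : Set.uIcc r R = Set.Icc r R := Set.uIcc_of_le hrR
    have contsinh : Continuous fun η : ℝ => Real.sinh (η * a) ^ p :=
      (Real.continuous_sinh.comp (continuous_id.mul continuous_const)).rpow_const
        fun x => Or.inr hp.le
    have contpow : Continuous fun η : ℝ => η ^ p :=
      continuous_id.rpow_const fun x => Or.inr hp.le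
    have keyK : ∀ ξ ∈ Set.uIcc r R,
        (∫ η in ξ..R, (Real.sinh (η * a) / Real.sinh (ξ * a)) ^ p) =
          (∫ η in ξ..R, Real.sinh (η * a) ^ p) / Real.sinh (ξ * a) ^ p := by
      intro ξ hξ
      rw [huIcc] at hξ
      rw [← intervalIntegral.integral_div]
      apply intervalIntegral.integral_congr
      intro η hη
      rw [Set.uIcc_of_le hξ.2] at hη
      have hη0 : 0 < η := lt_of_lt_of_le (lt_of_lt_of_le hr hξ.1) hη.1
      exact Real.div_rpow (Real.sinh_nonneg_iff.2 (mul_pos hη0 ha).le)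
        (Real.sinh_nonneg_iff.2 (mul_pos (lt_of_lt_of_le hr hξ.1) ha).le) p
    have key0 : ∀ ξ ∈ Set.uIcc r R,
        (∫ η in ξ..R, (η / ξ) ^ p) = (∫ η in ξ..R, η ^ p) / ξ ^ p := by
      intro ξ hξ
      rw [huIcc] at hξ
      rw [← intervalIntegral.integral_div]
      apply intervalIntegral.integral_congr
      intro η hη
      rw [Set.uIcc_of_le hξ.2] at hη
      have hη0 : 0 < η := lt_of_lt_of_le (lt_of_lt_of_le hr hξ.1) hη.1
      exact Real.div_rpow hη0.le (lt_of_lt_of_le hr hξ.1).le p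
    have hcontK : ContinuousOn (fun ξ => ∫ η in ξ..R,
        (Real.sinh (η * a) / Real.sinh (ξ * a)) ^ p) (Set.uIcc r R) := by
      apply ContinuousOn.congr _ keyK
      apply ContinuousOn.div
      · exact intervalIntegral.continuousOn_primitive_interval_left
          (contsinh.integrableOn_uIcc)
      · exact (contsinh.comp (continuous_id)).continuousOn |>.congr (fun x hx => rfl) |>.mono
          (Set.subset_univ _) |>.mono (Set.subset_univ _)
      · intro ξ hξ
        rw [huIcc] at hξ
        exact (Real.rpow_pos_of_pos (Real.sinh_pos_iff.2
          (mul_pos (lt_of_lt_of_le hr hξ.1) ha)) p).ne'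
    have hcont0 : ContinuousOn (fun ξ => ∫ η in ξ..R, (η / ξ) ^ p) (Set.uIcc r R) := by
      apply ContinuousOn.congr _ key0
      apply ContinuousOn.div
      · exact intervalIntegral.continuousOn_primitive_interval_left
          (contpow.integrableOn_uIcc)
      · exact contpow.continuousOn
      · intro ξ hξ
        rw [huIcc] at hξ
        exact (Real.rpow_pos_of_pos (lt_of_lt_of_le hr hξ.1) p).ne'
    have intOutK : IntervalIntegrable (fun ξ => ∫ η in ξ..R,
        (Real.sinh (η * a) / Real.sinh (ξ * a)) ^ p) MeasureTheory.volume r R :=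
      hcontK.intervalIntegrable
    have intOut0 : IntervalIntegrable (fun ξ => ∫ η in ξ..R, (η / ξ) ^ p)
        MeasureTheory.volume r R :=
      hcont0.intervalIntegrable
    -- rewrite phiKN
    have hphiK : phiKN K N r R = ∫ ξ in r..R, ∫ η in ξ..R,
        (Real.sinh (η * a) / Real.sinh (ξ * a)) ^ p := by
      simp only [phiKN, hratio, ← hpdef]
    have hphi0 : phiKN 0 N r R = ∫ ξ in r..R, ∫ η in ξ..R, (η / ξ) ^ p := by
      simp only [phiKN, h0, ← hpdef]
    have hcR : (sKN K N R / R) ^ p = c ^ p := by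
      rw [hsKN, hcdef]
      congr 1
      field_simp
    constructor
    · rw [hphi0, hphiK]
      exact intervalIntegral.integral_mono_on hrR intOut0 intOutK inner1
    · rw [hphi0, hphiK, hcR, ← intervalIntegral.integral_const_mul]
      exact intervalIntegral.integral_mono_on hrR intOutK
        (intOut0.const_mul _) inner2
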